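/- Let p ≥ 3 be prime and a ∈ ℚ_p with |a|_p > 1, and suppose there is no c ∈ ℚ_p with c² = -a. Then for every x ∈ ℚ_p with 0 < |x|_p < 1, we have |a·x + 1/x|_p > 1. -/

import Mathlib

theorem stmt2 (p : ℕ) [Fact p.Prime] (hp : 3 ≤ p) (a : ℚ_[p]) (ha : 1 < ‖a‖)
    (hsq : ¬ ∃ c : ℚ_[p], c ^ 2 = -a)
    (x : ℚ_[p]) (hx0 : 0 < ‖x‖) (hx1 : ‖x‖ < 1) :
    1 < ‖a * x + 1 / x‖ := by
  have hxne : x ≠ 0 := by simpa using hx0.ne'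
  have hinv : 1 < ‖1 / x‖ := by
    rw [one_div, norm_inv]
    exact (one_lt_inv₀ hx0).mpr hx1
  by_cases h : ‖a * x‖ = ‖1 / x‖
  · -- equal norms case
    by_contra hc
    push_neg at hc
    -- ‖a * x^2‖ = 1
    have hbnorm : ‖-(a * x ^ 2)‖ = 1 := by
      rw [norm_neg]
      have : a * x ^ 2 = (a * x) * x := by ring
      rw [this, norm_mul, h, one_div, norm_inv]
      field_simp
    have hb1 : ‖(1 : ℚ_[p]) - -(a * x ^ 2)‖ < 1 := by
      have he : (1 : ℚ_[p]) - -(a * x ^ 2) = (a * x + 1 / x) * x := by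
        field_simp; ring
      rw [he, norm_mul]
      calc ‖a * x + 1 / x‖ * ‖x‖ ≤ 1 * ‖x‖ := by
            exact mul_le_mul_of_nonneg_right hc (norm_nonneg x)
        _ = ‖x‖ := one_mul _
        _ < 1 := hx1
    -- lift to ℤ_p
    set B : ℤ_[p] := ⟨-(a * x ^ 2), le_of_eq hbnorm⟩ with hB
    have h2 : ‖(2 : ℤ_[p])‖ = 1 := by
      have hple : ¬ ((p : ℤ) ∣ 2) := by
        intro hd
        have := Int.le_of_dvd (by norm_num) hd
        omega
      have hnl : ¬ ‖((2 : ℤ) : ℚ_[p])‖ < 1 := by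
        rw [Padic.norm_intCast_lt_one_iff]; exact_mod_cast hple
      have hle : ‖(2 : ℤ_[p])‖ ≤ 1 := PadicInt.norm_le_one _
      have hcoe : ‖(2 : ℤ_[p])‖ = ‖((2 : ℤ) : ℚ_[p])‖ := by
        rw [PadicInt.norm_def]
        norm_cast
      rw [hcoe] at hle ⊢
      exact le_antisymm hle (not_lt.mp hnl)
    set F : Polynomial ℤ_[p] := Polynomial.X ^ 2 - Polynomial.C B with hF
    have heval : ‖F.eval 1‖ < ‖F.derivative.eval 1‖ ^ 2 := by
      have hd : F.derivative.eval 1 = 2 := by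
        simp [hF, Polynomial.derivative_sub, Polynomial.derivative_X_pow, one_add_one_eq_two]
      have he : F.eval 1 = 1 - B := by simp [hF]
      rw [hd, he, h2, one_pow]
      have hcoe2 : (((1:ℤ_[p]) - B : ℤ_[p]) : ℚ_[p]) = (1 : ℚ_[p]) - -(a * x ^ 2) := by
        push_cast
        rfl
      have : ‖((1:ℤ_[p]) - B : ℤ_[p])‖ = ‖(1 : ℚ_[p]) - -(a * x ^ 2)‖ := by
        rw [PadicInt.norm_def, hcoe2]
      rw [this]; exact hb1
    obtain ⟨z, hz, -⟩ := hensels_lemma heval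
    have hzB : z ^ 2 = B := by
      have h' := hz
      simp only [hF, Polynomial.coe_aeval_eq_eval, Polynomial.eval_sub, Polynomial.eval_pow, Polynomial.eval_X,
        Polynomial.eval_C, sub_eq_zero] at h'
      exact h'
    have hz2 : (z : ℚ_[p]) ^ 2 = -(a * x ^ 2) := by
      have := congrArg (fun t : ℤ_[p] => (t : ℚ_[p])) hzB
      push_cast at this
      rw [this]
    apply hsq
    refine ⟨(z : ℚ_[p]) / x, ?_⟩
    field_simp
    linear_combination hz2
  · -- unequal norms: norm of sum is max
    rw [Padic.add_eq_max_of_ne h]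
    exact lt_of_lt_of_le hinv (le_max_right _ _)
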